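/- For every c ∈ (0, 1/2), K ≥ 2, score vector g ∈ ℝ^K, and label y ∈ {1,…,K}: ℓ01c(d, y) ≤ L_CS^{ℓ01}(g, y), where d is the decision induced by g, ℓ01c(d, y) equals c if d = ®, equals 1 if d is a class different from y, and equals 0 if d = y, and L_CS^{ℓ01} is the cost-sensitive surrogate loss with the margin zero-one loss ℓ01. -/

import Mathlib

open Classical

/-- The margin zero-one loss: `ℓ01(z) = 1` if `z ≤ 0` and `0` otherwise. -/
noncomputable def mloss01 (z : ℝ) : ℝ := if z ≤ 0 then 1 else 0

/-- The cost-sensitive surrogate loss `L_CS^φ(g, y) = c·φ(g_y) + (1−c)·∑_{y'≠y} φ(−g_{y'})`. -/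
noncomputable def LCS {K : ℕ} (φ : ℝ → ℝ) (c : ℝ) (g : Fin K → ℝ) (y : Fin K) : ℝ :=
  c * φ (g y) + (1 - c) * ∑ y' ∈ Finset.univ.erase y, φ (-(g y'))

/-- The decision rule induced by a score vector `g`: reject (`none`) if
`max_y g_y ≤ 0` or if two distinct coordinates of `g` are strictly positive,
otherwise output the unique class `y` with `g_y > 0`. -/
noncomputable def decRule {K : ℕ} (g : Fin K → ℝ) : Option (Fin K) :=
  if h : ∃! y, 0 < g y then some h.choose else none

/-- The zero-one-c loss of a decision (`none` = rejection ®) against a label `y`: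
`c` for rejection, `0` for the correct class, `1` for a wrong class. -/
noncomputable def loss01c {K : ℕ} (c : ℝ) (y : Fin K) : Option (Fin K) → ℝ
  | none => c
  | some z => if z = y then 0 else 1


lemma mloss01_nonneg (z : ℝ) : 0 ≤ mloss01 z := by
  unfold mloss01; split <;> norm_num

lemma mloss01_of_nonpos {z : ℝ} (h : z ≤ 0) : mloss01 z = 1 := if_pos h

/-- The zero-one-c loss of the decision induced by `g` is bounded by the
cost-sensitive surrogate loss with the margin zero-one loss:
`ℓ01c(d, y) ≤ L_CS^{ℓ01}(g, y)`. -/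
theorem stmt7 (c : ℝ) (hc0 : 0 < c) (hc : c < 1/2) (K : ℕ) (hK : 2 ≤ K)
    (g : Fin K → ℝ) (y : Fin K) :
    loss01c c y (decRule g) ≤ LCS mloss01 c g y := by
  have h1c : (0:ℝ) < 1 - c := by linarith
  have hsum0 : 0 ≤ ∑ y' ∈ Finset.univ.erase y, mloss01 (-(g y')) :=
    Finset.sum_nonneg fun _ _ => mloss01_nonneg _
  have key : ∀ z : Fin K, z ≠ y → 0 < g z →
      (1:ℝ) ≤ ∑ y' ∈ Finset.univ.erase y, mloss01 (-(g y')) := by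
    intro z hzy hzpos
    have hmem : z ∈ Finset.univ.erase y := Finset.mem_erase.2 ⟨hzy, Finset.mem_univ z⟩
    have := Finset.single_le_sum (f := fun y' => mloss01 (-(g y')))
      (fun i _ => mloss01_nonneg _) hmem
    rwa [mloss01_of_nonpos (by linarith : -g z ≤ 0)] at this
  unfold decRule
  split
  · next h =>
    have hzpos : 0 < g h.choose := h.choose_spec.1
    have huniq := h.choose_spec.2
    simp only [loss01c]
    by_cases hzy : h.choose = y
    · rw [if_pos hzy]
      unfold LCS
      have := mloss01_nonneg (g y)
      nlinarith
    · rw [if_neg hzy]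
      have hgy : g y ≤ 0 := by
        by_contra h'
        exact hzy ((huniq y (by linarith)).symm)
      have h1 := key h.choose hzy hzpos
      unfold LCS
      rw [mloss01_of_nonpos hgy]
      nlinarith
  · next h =>
    simp only [loss01c]
    by_cases hgy : g y ≤ 0
    · unfold LCS
      rw [mloss01_of_nonpos hgy]
      nlinarith
    · push_neg at hgy
      have : ∃ z, 0 < g z ∧ z ≠ y := by
        by_contra hcon
        push_neg at hcon
        exact h ⟨y, hgy, fun z hz => hcon z hz⟩
      obtain ⟨z, hz, hzy⟩ := this
      have h1 := key z hzy hz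
      unfold LCS
      have := mloss01_nonneg (g y)
      nlinarith
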